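/- Let ρ ∈ H be nonzero and suppose ‖qAρ + pBρ‖ = ‖ρ‖. Then Aρ = Bρ and ‖Aρ‖ = ‖Bρ‖ = ‖ρ‖. -/
import Mathlib


/-- Let `H` be a complex inner product space, `A, B` bounded operators with
`‖A‖ ≤ 1`, `‖B‖ ≤ 1`, `0 < p < 1`, `q = 1 - p`.  If `ρ ≠ 0` and `‖q A ρ + p B ρ‖ = ‖ρ‖`,
then `A ρ = B ρ` and `‖A ρ‖ = ‖B ρ‖ = ‖ρ‖`. -/
theorem stmt4 {H : Type*} [NormedAddCommGroup H] [InnerProductSpace ℂ H]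
    (A B : H →L[ℂ] H) (hA : ‖A‖ ≤ 1) (hB : ‖B‖ ≤ 1)
    (p q : ℝ) (hp : 0 < p) (hp1 : p < 1) (hq : q = 1 - p)
    (ρ : H) (hρ : ρ ≠ 0)
    (h : ‖(q : ℂ) • A ρ + (p : ℂ) • B ρ‖ = ‖ρ‖) :
    A ρ = B ρ ∧ ‖A ρ‖ = ‖ρ‖ ∧ ‖B ρ‖ = ‖ρ‖ := by
  have hq0 : 0 < q := by simp [hq]; linarith
  have hρ0 : 0 < ‖ρ‖ := norm_pos_iff.mpr hρ
  have hx : ‖A ρ‖ ≤ ‖ρ‖ := by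
    calc ‖A ρ‖ ≤ ‖A‖ * ‖ρ‖ := A.le_opNorm ρ
    _ ≤ ‖ρ‖ := by nlinarith [norm_nonneg (A ρ)]
  have hy : ‖B ρ‖ ≤ ‖ρ‖ := by
    calc ‖B ρ‖ ≤ ‖B‖ * ‖ρ‖ := B.le_opNorm ρ
    _ ≤ ‖ρ‖ := by nlinarith [norm_nonneg (B ρ)]
  have hnu : ‖(q : ℂ) • A ρ‖ = q * ‖A ρ‖ := by
    rw [norm_smul]; simp [abs_of_pos hq0]
  have hnv : ‖(p : ℂ) • B ρ‖ = p * ‖B ρ‖ := by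
    rw [norm_smul]; simp [abs_of_pos hp]
  have htr : ‖ρ‖ ≤ q * ‖A ρ‖ + p * ‖B ρ‖ := by
    rw [← h, ← hnu, ← hnv]; exact norm_add_le _ _
  have hxe : ‖A ρ‖ = ‖ρ‖ := by nlinarith
  have hye : ‖B ρ‖ = ‖ρ‖ := by nlinarith
  refine ⟨?_, hxe, hye⟩
  letI : InnerProductSpace ℝ H := InnerProductSpace.rclikeToReal ℂ H
  haveI : StrictConvexSpace ℝ H := inferInstance
  have heq : ‖(q : ℂ) • A ρ + (p : ℂ) • B ρ‖ = ‖(q : ℂ) • A ρ‖ + ‖(p : ℂ) • B ρ‖ := by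
    rw [h, hnu, hnv, hxe, hye, hq]; ring
  have hray : SameRay ℝ ((q : ℂ) • A ρ) ((p : ℂ) • B ρ) := sameRay_iff_norm_add.mpr heq
  have hu0 : (q : ℂ) • A ρ ≠ 0 := by
    intro h0
    have := hnu
    rw [h0, norm_zero, hxe] at this
    nlinarith
  have hv0 : (p : ℂ) • B ρ ≠ 0 := by
    intro h0
    have := hnv
    rw [h0, norm_zero, hye] at this
    nlinarith
  have hinv := ((sameRay_iff_inv_norm_smul_eq.mp hray).resolve_left hu0).resolve_left hv0
  rw [hnu, hnv, hxe, hye] at hinv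
  have hA' : (q * ‖ρ‖)⁻¹ • (q : ℂ) • A ρ = ‖ρ‖⁻¹ • A ρ := by
    rw [Complex.coe_smul, smul_smul]
    congr 1
    field_simp
  have hB' : (p * ‖ρ‖)⁻¹ • (p : ℂ) • B ρ = ‖ρ‖⁻¹ • B ρ := by
    rw [Complex.coe_smul, smul_smul]
    congr 1
    field_simp
  rw [hA', hB'] at hinv
  have := smul_right_injective H (inv_ne_zero hρ0.ne') hinv
  exact this
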